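/- Let k be a field, F = k((ε)) the field of formal Laurent series, O = k[[ε]], and val the ε-adic valuation. Let γ_1, …, γ_d ∈ O be pairwise distinct, and let Λ ⊆ F^d be the O-submodule generated by the d vectors v_s = (γ_1^s, γ_2^s, …, γ_d^s) for s = 0, 1, …, d−1. Then for every permutation σ of {1,…,d} and every index i ∈ {1,…,d}, the set { a ∈ F : there exists x ∈ Λ with x_{σ(j)} = 0 for all 1 ≤ j ≤ i−1 and x_{σ(i)} = a } equals the fractional ideal ε^{m_i}·O, where m_i = ∑_{j=1}^{i−1} val(γ_{σ(i)} − γ_{σ(j)}). -/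

import Mathlib

open Polynomial

/-- In a domain, a polynomial vanishing at distinct points is divisible by the product
of the corresponding linear factors. -/
lemma prod_X_sub_C_dvd_of_roots {R : Type*} [CommRing R] [IsDomain R] {ι : Type*}
    [DecidableEq ι] (s : Finset ι) (f : ι → R) (P : R[X])
    (hf : Set.InjOn f s) (h : ∀ j ∈ s, P.eval (f j) = 0) :
    (∏ j ∈ s, (Polynomial.X - Polynomial.C (f j))) ∣ P := by
  induction s using Finset.induction_on generalizing P with
  | empty => simp
  | @insert a s ha ih =>
    obtain ⟨Q, hQ⟩ := (dvd_iff_isRoot).mpr (h a (Finset.mem_insert_self a s))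
    rw [Finset.prod_insert ha, hQ]
    refine mul_dvd_mul_left _ (ih Q (hf.mono (by simp [Finset.subset_insert])) ?_)
    intro j hj
    have hja : f j ≠ f a := fun hja => ha (by
      have := hf (Finset.mem_insert_of_mem hj) (Finset.mem_insert_self a s) hja
      rwa [this] at hj)
    have := h j (Finset.mem_insert_of_mem hj)
    rw [hQ, eval_mul, eval_sub, eval_X, eval_C] at this
    rcases mul_eq_zero.mp this with h1 | h1
    · exact absurd (sub_eq_zero.mp h1) hja
    · exact h1

lemma ps_coe_ne_zero {k : Type*} [Field k] {f : PowerSeries k} (hf : f ≠ 0) :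
    (f : LaurentSeries k) ≠ 0 := by
  intro h
  apply hf
  apply HahnSeries.ofPowerSeries_injective (Γ := ℤ)
  rw [h, map_zero]

lemma order_coe_unit {k : Type*} [Field k] {u : PowerSeries k} (hu : IsUnit u) :
    ((u : LaurentSeries k)).order = 0 := by
  have hu0 : u ≠ 0 := hu.ne_zero
  have hc : (PowerSeries.constantCoeff (R := k)) u ≠ 0 := by
    intro h
    have := PowerSeries.isUnit_iff_constantCoeff.mp hu
    rw [h] at this
    exact this.ne_zero rfl
  have hcoeff : ((u : LaurentSeries k)).coeff (0 : ℤ) ≠ 0 := by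
    have : ((u : LaurentSeries k)).coeff ((0:ℕ) : ℤ) = PowerSeries.coeff 0 u :=
      LaurentSeries.coeff_coe_powerSeries u 0
    rw [Int.natCast_zero] at this
    rw [this, PowerSeries.coeff_zero_eq_constantCoeff]
    exact hc
  refine le_antisymm (HahnSeries.order_le_of_coeff_ne_zero hcoeff) ?_
  by_contra hlt
  push_neg at hlt
  have h1 := HahnSeries.coeff_order_eq_zero.not.mpr (ps_coe_ne_zero hu0)
  rw [PowerSeries.coeff_coe, if_pos hlt] at h1
  exact h1 rfl

lemma order_coe_factor {k : Type*} [Field k] {f : PowerSeries k} (hf : f ≠ 0) :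
    ∃ (n : ℕ) (u : PowerSeries k), IsUnit u ∧ f = PowerSeries.X ^ n * u ∧
      ((f : LaurentSeries k)).order = (n : ℤ) := by
  set n := f.order.toNat with hn
  refine ⟨n, PowerSeries.divXPowOrder f,
    PowerSeries.isUnit_divided_by_X_pow_order hf,
    (PowerSeries.X_pow_order_mul_divXPowOrder (f := f)).symm, ?_⟩
  have heq : (f : LaurentSeries k)
      = (HahnSeries.single (n : ℤ) (1 : k)) * (PowerSeries.divXPowOrder f
          : LaurentSeries k) := by
    conv_lhs => rw [← PowerSeries.X_pow_order_mul_divXPowOrder (f := f)]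
    rw [PowerSeries.coe_mul, PowerSeries.coe_pow, PowerSeries.coe_X, HahnSeries.single_pow]
    norm_num
    exact Or.inl rfl
  rw [heq, HahnSeries.order_mul (by simp [HahnSeries.single_ne_zero])
      (ps_coe_ne_zero (PowerSeries.isUnit_divided_by_X_pow_order hf).ne_zero),
    HahnSeries.order_single one_ne_zero,
    order_coe_unit (PowerSeries.isUnit_divided_by_X_pow_order hf), add_zero]

lemma order_coe_prod {k : Type*} [Field k] {ι : Type*} [DecidableEq ι] (s : Finset ι)
    (f : ι → PowerSeries k) (hf : ∀ j ∈ s, f j ≠ 0) :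
    (((∏ j ∈ s, f j : PowerSeries k)) : LaurentSeries k).order
      = ∑ j ∈ s, ((f j : LaurentSeries k)).order := by
  induction s using Finset.induction_on with
  | empty => simp [PowerSeries.coe_one]
  | @insert a s ha ih =>
    rw [Finset.prod_insert ha, Finset.sum_insert ha, PowerSeries.coe_mul,
      HahnSeries.order_mul (ps_coe_ne_zero (hf a (Finset.mem_insert_self a s)))
        (ps_coe_ne_zero (Finset.prod_ne_zero_iff.mpr fun j hj =>
          hf j (Finset.mem_insert_of_mem hj))),
      ih fun j hj => hf j (Finset.mem_insert_of_mem hj)]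

/-- **The position of the regular point `x₀` of the affine Springer fiber for `GL_d`.**
Let `F = k((ε))`, `O = k[[ε]]`, let `γ 0, …, γ (d-1) ∈ O` be pairwise distinct and let
`Λ ⊆ F^d` be the `O`-submodule generated by the vectors `v_s = (γ 0 ^ s, …, γ (d-1) ^ s)`,
`0 ≤ s ≤ d-1`.  Then for any permutation `σ` and any index `i`, the set of `i`-th coordinates
(in the order given by `σ`) of elements of `Λ` whose earlier `σ`-coordinates vanish is the
fractional ideal `ε^{m_i}·O`, with `m_i = ∑_{j<i} val(γ (σ i) - γ (σ j))`. -/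
theorem regular_point_lattice_coordinates (k : Type*) [Field k] (d : ℕ)
    (γ : Fin d → PowerSeries k) (hγ : Function.Injective γ)
    (σ : Equiv.Perm (Fin d)) (i : Fin d) :
    {a : LaurentSeries k |
        ∃ x ∈ Submodule.span (PowerSeries k)
            (Set.range fun s : Fin d =>
              (fun l : Fin d => ((γ l : LaurentSeries k) ^ (s : ℕ)))),
          (∀ j : Fin d, j < i → x (σ j) = 0) ∧ x (σ i) = a}
      = {a : LaurentSeries k | ∃ b : PowerSeries k,
          a = ((PowerSeries.X : PowerSeries k) : LaurentSeries k)
                ^ (∑ j ∈ Finset.Iio i,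
                    ((γ (σ i) : LaurentSeries k) - (γ (σ j) : LaurentSeries k)).order)
              * (b : LaurentSeries k)} := by
  classical
  have hδne : ∀ j ∈ Finset.Iio i, γ (σ i) - γ (σ j) ≠ 0 := by
    intro j hj
    rw [sub_ne_zero]
    intro h
    exact absurd (σ.injective (hγ h)).symm (Finset.mem_Iio.mp hj).ne
  set D : PowerSeries k := ∏ j ∈ Finset.Iio i, (γ (σ i) - γ (σ j)) with hD
  have hDne : D ≠ 0 := Finset.prod_ne_zero_iff.mpr hδne
  obtain ⟨N, U, hU, hDeq, hDord⟩ := order_coe_factor hDne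
  have hm : (∑ j ∈ Finset.Iio i,
      ((γ (σ i) : LaurentSeries k) - (γ (σ j) : LaurentSeries k)).order) = (N : ℤ) := by
    rw [Finset.sum_congr rfl (fun j _ => by
      rw [show (γ (σ i) : LaurentSeries k) - (γ (σ j) : LaurentSeries k)
        = ((γ (σ i) - γ (σ j) : PowerSeries k) : LaurentSeries k)
        from (PowerSeries.coe_sub _ _).symm]),
      ← order_coe_prod _ _ hδne, ← hD, hDord]
  have hXpow : ((PowerSeries.X : PowerSeries k) : LaurentSeries k)
      ^ (∑ j ∈ Finset.Iio i,
          ((γ (σ i) : LaurentSeries k) - (γ (σ j) : LaurentSeries k)).order)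
      = ((PowerSeries.X ^ N : PowerSeries k) : LaurentSeries k) := by
    rw [hm, zpow_natCast, PowerSeries.coe_pow]
  ext a
  simp only [Set.mem_setOf_eq]
  constructor
  · rintro ⟨x, hxspan, hzero, hxi⟩
    obtain ⟨c, hc⟩ := (Submodule.mem_span_range_iff_exists_fun _).mp hxspan
    set P : Polynomial (PowerSeries k)
      := ∑ s : Fin d, Polynomial.C (c s) * Polynomial.X ^ (s : ℕ) with hP
    have hkey : ∀ l : Fin d, ((P.eval (γ l) : PowerSeries k) : LaurentSeries k) = x l := by
      intro l
      have h1 := congrFun hc l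
      simp only [Finset.sum_apply, Pi.smul_apply] at h1
      rw [← h1, hP, Polynomial.eval_finset_sum]
      rw [show (((∑ s : Fin d, Polynomial.eval (γ l) (Polynomial.C (c s) * Polynomial.X ^ (s:ℕ))
          : PowerSeries k)) : LaurentSeries k)
        = HahnSeries.ofPowerSeries ℤ k
            (∑ s : Fin d, Polynomial.eval (γ l) (Polynomial.C (c s) * Polynomial.X ^ (s:ℕ)))
        from rfl, map_sum]
      refine Finset.sum_congr rfl fun s _ => ?_
      rw [Polynomial.eval_mul, Polynomial.eval_C, Polynomial.eval_pow, Polynomial.eval_X,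
        map_mul, map_pow, Algebra.smul_def, LaurentSeries.coe_algebraMap]
    have hroots : ∀ j ∈ Finset.Iio i, P.eval (γ (σ j)) = 0 := by
      intro j hj
      apply HahnSeries.ofPowerSeries_injective (Γ := ℤ)
      rw [map_zero]
      rw [show (HahnSeries.ofPowerSeries ℤ k) (P.eval (γ (σ j)))
        = ((P.eval (γ (σ j)) : PowerSeries k) : LaurentSeries k) from rfl,
        hkey (σ j), hzero j (Finset.mem_Iio.mp hj)]
    have hinj : Set.InjOn (fun j => γ (σ j)) (Finset.Iio i : Finset (Fin d)) :=
      fun a _ b _ h => σ.injective (hγ h)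
    obtain ⟨Q, hQ⟩ := prod_X_sub_C_dvd_of_roots (Finset.Iio i) (fun j => γ (σ j)) P hinj hroots
    have hevalD : (∏ j ∈ Finset.Iio i,
        (Polynomial.X - Polynomial.C (γ (σ j)))).eval (γ (σ i)) = D := by
      rw [Polynomial.eval_prod]
      exact Finset.prod_congr rfl fun j _ => by simp
    refine ⟨U * Q.eval (γ (σ i)), ?_⟩
    rw [← hxi, ← hkey (σ i), hQ, Polynomial.eval_mul, hevalD, hDeq, hXpow,
      ← PowerSeries.coe_mul, mul_assoc]
  · rintro ⟨b, rfl⟩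
    obtain ⟨U', hU'⟩ := hU
    set P : Polynomial (PowerSeries k) := Polynomial.C (b * ↑U'⁻¹)
      * ∏ j ∈ Finset.Iio i, (Polynomial.X - Polynomial.C (γ (σ j))) with hP
    have hdeg : P.natDegree < d := by
      have h1 : P.natDegree ≤ 0 + (∏ j ∈ Finset.Iio i,
          (Polynomial.X - Polynomial.C (γ (σ j)))).natDegree := by
        have := Polynomial.natDegree_mul_le (p := Polynomial.C (b * ↑U'⁻¹))
          (q := ∏ j ∈ Finset.Iio i, (Polynomial.X - Polynomial.C (γ (σ j))))
        rwa [Polynomial.natDegree_C] at this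
      have h2 : (∏ j ∈ Finset.Iio i,
          (Polynomial.X - Polynomial.C (γ (σ j)))).natDegree = (i : ℕ) := by
        rw [Polynomial.natDegree_prod_of_monic _ _
          (fun j _ => Polynomial.monic_X_sub_C _)]
        simp [Fin.card_Iio]
      refine lt_of_le_of_lt (h1.trans ?_) i.isLt
      rw [h2, zero_add]
    refine ⟨fun l => ((P.eval (γ l) : PowerSeries k) : LaurentSeries k), ?_, ?_, ?_⟩
    · apply (Submodule.mem_span_range_iff_exists_fun _).mpr
      refine ⟨fun s : Fin d => P.coeff s, ?_⟩
      funext l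
      simp only [Finset.sum_apply, Pi.smul_apply]
      rw [Polynomial.eval_eq_sum_range' hdeg]
      rw [show (((∑ s ∈ Finset.range d, P.coeff s * (γ l) ^ s : PowerSeries k))
          : LaurentSeries k)
        = HahnSeries.ofPowerSeries ℤ k (∑ s ∈ Finset.range d, P.coeff s * (γ l) ^ s)
        from rfl, map_sum, ← Fin.sum_univ_eq_sum_range
          (fun s => (HahnSeries.ofPowerSeries ℤ k) (P.coeff s * (γ l) ^ s)) d]
      refine Finset.sum_congr rfl fun s _ => ?_
      rw [map_mul, map_pow, Algebra.smul_def, LaurentSeries.coe_algebraMap]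
    · intro j hj
      beta_reduce
      rw [Polynomial.eval_mul, Polynomial.eval_prod,
        Finset.prod_eq_zero (Finset.mem_Iio.mpr hj) (by simp), mul_zero]
      exact map_zero _
    · have hevalD : (∏ j ∈ Finset.Iio i,
          (Polynomial.X - Polynomial.C (γ (σ j)))).eval (γ (σ i)) = D := by
        rw [Polynomial.eval_prod]
        exact Finset.prod_congr rfl fun j _ => by simp
      beta_reduce
      rw [Polynomial.eval_mul, Polynomial.eval_C, hevalD, hDeq, ← hU']
      rw [show b * ↑U'⁻¹ * (PowerSeries.X ^ N * ↑U')
        = PowerSeries.X ^ N * b * (↑U'⁻¹ * ↑U') by ring, Units.inv_mul, mul_one]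
      rw [hXpow, map_mul]
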